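/- Let $P^{\uparrow} \subseteq \mathbb{R}^E$ be the dominant of a polytope, let $\overline{uv}$ be a bounded edge of $P^{\uparrow}$ with midpoint $x^0$ and direction $w \in \{-1,0,1\}^E$. Then there exist strictly positive, continuous, strictly increasing affine cost functions $c_e(t) = -h_e + 2\gamma(t - x^0_e)$ (for suitable $h < 0$ and $\gamma > 0$) such that $x^0$ is the unique minimizer over $P^{\uparrow}$ of the Beckmann potential $\Phi(x) = \sum_{e \in E} \int_0^{x_e} c_e(t)\,dt$. -/

import Mathlib

open Finset MeasureTheory

/-- `segment ℝ u v` (with `u ≠ v`) is a (bounded) edge of `Q` when it is an extreme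
subset of `Q`, i.e. a one-dimensional face. -/
def IsEdgeOf {V : Type*} [AddCommGroup V] [Module ℝ V] (Q : Set V) (u v : V) : Prop :=
  u ≠ v ∧ IsExtreme ℝ Q (segment ℝ u v)

/-- The dominant of a set `Q ⊆ ℝ^E`: `Q + ℝ₊^E`. -/
def dominant {E : Type*} (Q : Set (E → ℝ)) : Set (E → ℝ) :=
  {x | ∃ y ∈ Q, y ≤ x}

/-- The Beckmann potential. -/
noncomputable def beckmann {E : Type*} [Fintype E] (c : E → ℝ → ℝ) (x : E → ℝ) : ℝ :=
  ∑ e, ∫ t in (0:ℝ)..(x e), c e t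


namespace Stmt9Aux

variable {E : Type*} [Fintype E] [DecidableEq E]

/-- The cone generated by a finite set of vectors. -/
def coneOf (G : Finset (E → ℝ)) : Set (E → ℝ) :=
  {x | ∃ lam : (E → ℝ) → ℝ, (∀ g ∈ G, 0 ≤ lam g) ∧ x = ∑ g ∈ G, lam g • g}

lemma zero_mem_coneOf (G : Finset (E → ℝ)) : (0 : E → ℝ) ∈ coneOf G :=
  ⟨0, fun _ _ => le_rfl, by simp⟩

lemma mem_coneOf_self {G : Finset (E → ℝ)} {g : E → ℝ} (hg : g ∈ G) : g ∈ coneOf G := by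
  refine ⟨fun g' => if g' = g then 1 else 0, fun g' _ => by positivity, ?_⟩
  rw [Finset.sum_eq_single g]
  · simp
  · intro g' _ hne; simp [hne]
  · intro h; exact absurd hg h

lemma smul_mem_coneOf {G : Finset (E → ℝ)} {x : E → ℝ} {t : ℝ} (ht : 0 ≤ t)
    (hx : x ∈ coneOf G) : t • x ∈ coneOf G := by
  obtain ⟨lam, hnn, rfl⟩ := hx
  refine ⟨fun g => t * lam g, fun g hg => mul_nonneg ht (hnn g hg), ?_⟩
  rw [Finset.smul_sum]
  exact Finset.sum_congr rfl fun g _ => by rw [smul_smul]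

lemma convex_coneOf (G : Finset (E → ℝ)) : Convex ℝ (coneOf G) := by
  rintro x ⟨lx, hlx, rfl⟩ y ⟨ly, hly, rfl⟩ a b ha hb _
  refine ⟨fun g => a * lx g + b * ly g, fun g hg =>
    add_nonneg (mul_nonneg ha (hlx g hg)) (mul_nonneg hb (hly g hg)), ?_⟩
  rw [Finset.smul_sum, Finset.smul_sum, ← Finset.sum_add_distrib]
  exact Finset.sum_congr rfl fun g _ => by
    simp [smul_smul, add_smul]

lemma coneOf_mono {S G : Finset (E → ℝ)} (h : S ⊆ G) : coneOf S ⊆ coneOf G := by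
  rintro x ⟨lam, hnn, rfl⟩
  classical
  refine ⟨fun g => if g ∈ S then lam g else 0, fun g _ => ?_, ?_⟩
  · by_cases hgS : g ∈ S
    · simpa [hgS] using hnn g hgS
    · simp [hgS]
  · rw [← Finset.sum_subset h]
    · exact Finset.sum_congr rfl fun g hg => by simp [hg]
    · intro g _ hg; simp [hg]

/-- A handmade linear-independence predicate for finsets of vectors. -/
def FIndep (S : Finset (E → ℝ)) : Prop :=
  ∀ f : (E → ℝ) → ℝ, ∑ g ∈ S, f g • g = 0 → ∀ g ∈ S, f g = 0

/-- Conic Carathéodory. -/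
lemma caratheodory_coneOf :
    ∀ S : Finset (E → ℝ), ∀ x ∈ coneOf S, ∃ T ⊆ S, FIndep T ∧ x ∈ coneOf T := by
  intro S
  induction S using Finset.strongInduction with
  | _ S ih =>
    intro x hx
    by_cases hS : FIndep S
    · exact ⟨S, Finset.Subset.refl S, hS, hx⟩
    · rw [FIndep] at hS
      push_neg at hS
      obtain ⟨f, hf0, g1, hg1S, hfg1⟩ := hS
      -- WLOG some coefficient positive
      obtain ⟨c, hc0, g2, hg2S, hcg2⟩ :
          ∃ c : (E → ℝ) → ℝ, ∑ g ∈ S, c g • g = 0 ∧ ∃ g2 ∈ S, 0 < c g2 := by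
        rcases lt_or_gt_of_ne hfg1 with hlt | hgt
        · refine ⟨fun g => -f g, ?_, g1, hg1S, by simpa using neg_pos.mpr hlt⟩
          have : ∑ g ∈ S, (-f g) • g = -∑ g ∈ S, f g • g := by
            rw [← Finset.sum_neg_distrib]
            exact Finset.sum_congr rfl fun g _ => by rw [neg_smul]
          rw [this, hf0, neg_zero]
        · exact ⟨f, hf0, g1, hg1S, hgt⟩
      obtain ⟨lam, hnn, rfl⟩ := hx
      -- minimize lam g / c g over positive c g
      have hne : (S.filter (fun g => 0 < c g)).Nonempty := ⟨g2, by simp [hg2S, hcg2]⟩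
      obtain ⟨gm, hgm, hmin⟩ := Finset.exists_min_image _ (fun g => lam g / c g) hne
      rw [Finset.mem_filter] at hgm
      set t := lam gm / c gm with ht
      have htnn : 0 ≤ t := div_nonneg (hnn gm hgm.1) hgm.2.le
      set lam' : (E → ℝ) → ℝ := fun g => lam g - t * c g with hlam'
      have hnn' : ∀ g ∈ S, 0 ≤ lam' g := by
        intro g hg
        by_cases hcg : 0 < c g
        · have := hmin g (Finset.mem_filter.mpr ⟨hg, hcg⟩)
          rw [ht] at this
          have : t ≤ lam g / c g := this
          have := (le_div_iff₀ hcg).mp this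
          simp only [hlam']; linarith
        · push_neg at hcg
          have : t * c g ≤ 0 := mul_nonpos_of_nonneg_of_nonpos htnn hcg
          simp only [hlam']
          have := hnn g hg
          linarith
      have hsum' : ∑ g ∈ S, lam g • g = ∑ g ∈ S, lam' g • g := by
        simp only [hlam', sub_smul, Finset.sum_sub_distrib]
        rw [show ∑ g ∈ S, (t * c g) • g = t • ∑ g ∈ S, c g • g by
          rw [Finset.smul_sum]; exact Finset.sum_congr rfl fun g _ => by rw [smul_smul]]
        rw [hc0, smul_zero, sub_zero]
      have hgm0 : lam' gm = 0 := by
        have hc : c gm ≠ 0 := ne_of_gt hgm.2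
        simp only [hlam', ht]
        field_simp; ring
      have hx' : ∑ g ∈ S, lam g • g ∈ coneOf (S.erase gm) := by
        refine ⟨lam', fun g hg => hnn' g (Finset.mem_of_mem_erase hg), ?_⟩
        rw [hsum', ← Finset.sum_erase_add S _ hgm.1, hgm0, zero_smul, add_zero]
      obtain ⟨T, hTsub, hTind, hxT⟩ := ih (S.erase gm) (Finset.erase_ssubset hgm.1) _ hx'
      exact ⟨T, hTsub.trans (Finset.erase_subset _ _), hTind, hxT⟩

lemma isClosed_coneOf_of_findep (S : Finset (E → ℝ)) (hS : FIndep S) :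
    IsClosed (coneOf S) := by
  classical
  let T : ({g // g ∈ S} → ℝ) →ₗ[ℝ] (E → ℝ) :=
    { toFun := fun c => ∑ g ∈ S.attach, c g • (g : E → ℝ)
      map_add' := by
        intro a b
        rw [← Finset.sum_add_distrib]
        exact Finset.sum_congr rfl fun g _ => by rw [Pi.add_apply, add_smul]
      map_smul' := by
        intro t a
        rw [RingHom.id_apply, Finset.smul_sum]
        exact Finset.sum_congr rfl fun g _ => by
          rw [Pi.smul_apply, smul_eq_mul, smul_smul] }
  have hker : LinearMap.ker T = ⊥ := by
    rw [LinearMap.ker_eq_bot']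
    intro c hc
    have hc' : ∑ g ∈ S, (fun g => if h : g ∈ S then c ⟨g, h⟩ else 0) g • g = 0 := by
      rw [← Finset.sum_attach S (fun g => (if h : g ∈ S then c ⟨g, h⟩ else 0) • g)]
      simpa using (show ∑ g ∈ S.attach, c g • (g : E → ℝ) = 0 from hc)
    funext g
    have := hS _ hc' g.1 g.2
    simpa using this
  have hemb := LinearMap.isClosedEmbedding_of_injective hker
  have himg : coneOf S = T '' {c | ∀ g, 0 ≤ c g} := by
    ext x
    constructor
    · rintro ⟨lam, hnn, rfl⟩
      refine ⟨fun g => lam g.1, fun g => hnn g.1 g.2, ?_⟩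
      show ∑ g ∈ S.attach, lam g.1 • (g : E → ℝ) = _
      rw [Finset.sum_attach S (fun g => lam g • g)]
    · rintro ⟨c, hc, rfl⟩
      refine ⟨fun g => if h : g ∈ S then c ⟨g, h⟩ else 0, fun g hg => by
        simp only [dif_pos hg]; exact hc _, ?_⟩
      show _ = ∑ g ∈ S, (fun g => if h : g ∈ S then c ⟨g, h⟩ else 0) g • g
      rw [← Finset.sum_attach S (fun g => (if h : g ∈ S then c ⟨g, h⟩ else 0) • g)]
      exact (Finset.sum_congr rfl fun g _ => by simp [g.2]).symm
  rw [himg]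
  apply hemb.isClosedMap
  have : {c : {g // g ∈ S} → ℝ | ∀ g, 0 ≤ c g} = ⋂ g, {c | 0 ≤ c g} := by
    ext c; simp [Set.mem_iInter]
  rw [this]
  exact isClosed_iInter fun g => isClosed_le continuous_const (continuous_apply g)

lemma isClosed_coneOf (G : Finset (E → ℝ)) : IsClosed (coneOf G) := by
  classical
  have hdecomp : coneOf G =
      ⋃ S ∈ (G.powerset : Finset (Finset (E → ℝ))),
        (if FIndep S then coneOf S else ∅) := by
    ext x
    simp only [Set.mem_iUnion]
    constructor
    · intro hx
      obtain ⟨T, hTsub, hTind, hxT⟩ := caratheodory_coneOf G x hx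
      exact ⟨T, Finset.mem_powerset.mpr hTsub, by rw [if_pos hTind]; exact hxT⟩
    · rintro ⟨S, hS, hxS⟩
      by_cases hind : FIndep S
      · rw [if_pos hind] at hxS
        exact coneOf_mono (Finset.mem_powerset.mp hS) hxS
      · rw [if_neg hind] at hxS
        exact absurd hxS (Set.notMem_empty x)
  rw [hdecomp]
  apply Set.Finite.isClosed_biUnion (Finset.finite_toSet _)
  intro S _
  by_cases hind : FIndep S
  · rw [if_pos hind]; exact isClosed_coneOf_of_findep S hind
  · rw [if_neg hind]; exact isClosed_empty

/-- Farkas-type separation: if `b` is not in the cone generated by `G`, there is a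
linear functional nonpositive on `G` and positive at `b`. -/
lemma exists_separating (G : Finset (E → ℝ)) (b : E → ℝ) (hb : b ∉ coneOf G) :
    ∃ h : E → ℝ, (∀ g ∈ G, ∑ e, h e * g e ≤ 0) ∧ 0 < ∑ e, h e * b e := by
  obtain ⟨f, u, hfu, hub⟩ :=
    geometric_hahn_banach_closed_point (convex_coneOf G) (isClosed_coneOf G) hb
  have hu0 : 0 < u := by
    have := hfu 0 (zero_mem_coneOf G)
    simpa using this
  have hfG : ∀ g ∈ G, f g ≤ 0 := by
    intro g hg
    by_contra hpos
    push_neg at hpos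
    have hmem : ((u + 1) / f g) • g ∈ coneOf G :=
      smul_mem_coneOf (by positivity) (mem_coneOf_self hg)
    have := hfu _ hmem
    rw [f.map_smul, smul_eq_mul, div_mul_cancel₀ _ (ne_of_gt hpos)] at this
    linarith
  have hrepr : ∀ x : E → ℝ, f x = ∑ e, x e * f (Pi.single e 1) := by
    intro x
    conv_lhs => rw [← Finset.univ_sum_single x]
    rw [map_sum]
    exact Finset.sum_congr rfl fun e _ => by
      have hsingle : Pi.single e (x e) = x e • (Pi.single e (1:ℝ) : E → ℝ) := by
        funext j
        by_cases hj : j = e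
        · subst hj; simp
        · simp [Pi.single_apply, hj]
      rw [hsingle, f.map_smul, smul_eq_mul]
  refine ⟨fun e => f (Pi.single e 1), fun g hg => ?_, ?_⟩
  · have := hfG g hg
    rw [hrepr g] at this
    calc ∑ e, f (Pi.single e 1) * g e = ∑ e, g e * f (Pi.single e 1) := by
          exact Finset.sum_congr rfl fun e _ => mul_comm _ _
      _ ≤ 0 := this
  · have : (0:ℝ) < f b := lt_trans hu0 hub
    rw [hrepr b] at this
    calc (0:ℝ) < ∑ e, b e * f (Pi.single e 1) := this
      _ = ∑ e, f (Pi.single e 1) * b e := Finset.sum_congr rfl fun e _ => mul_comm _ _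

end Stmt9Aux


theorem stmt9 {E : Type*} [Fintype E] [DecidableEq E] (P : Set (E → ℝ))
    (hpoly : ∃ Vs : Finset (E → ℝ), P = convexHull ℝ (↑Vs : Set (E → ℝ)))
    (hPnn : P ⊆ {x | ∀ e, 0 ≤ x e})
    (u v : E → ℝ) (hedge : IsEdgeOf (dominant P) u v)
    (w : E → ℝ) (hw : ∀ e, w e = -1 ∨ w e = 0 ∨ w e = 1)
    (hpar : ∃ t : ℝ, t ≠ 0 ∧ v - u = t • w)
    (x0 : E → ℝ) (hx0 : x0 = (1/2 : ℝ) • (u + v)) :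
    ∃ (h : E → ℝ) (γ : ℝ), (∀ e, h e < 0) ∧ 0 < γ ∧
      (∀ e, ∀ t : ℝ, 0 ≤ t → 0 < -h e + 2 * γ * (t - x0 e)) ∧
      x0 ∈ dominant P ∧
      (∀ y ∈ dominant P, y ≠ x0 →
        beckmann (fun e t => -h e + 2 * γ * (t - x0 e)) x0 <
          beckmann (fun e t => -h e + 2 * γ * (t - x0 e)) y) := by
  classical
  obtain ⟨Vs, hP⟩ := hpoly
  have hx0seg : x0 ∈ segment ℝ u v := by
    refine ⟨1/2, 1/2, by norm_num, by norm_num, by norm_num, ?_⟩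
    rw [hx0]; module
  have hx0D : x0 ∈ dominant P := hedge.2.1 hx0seg
  have hVsP : ∀ p ∈ Vs, p ∈ P := fun p hp => hP ▸ subset_convexHull ℝ _ hp
  have hVsD : ∀ p ∈ Vs, p ∈ dominant P := fun p hp => ⟨p, hVsP p hp, le_rfl⟩
  have hDup : ∀ x ∈ dominant P, ∀ r : E → ℝ, (∀ e, 0 ≤ r e) → x + r ∈ dominant P := by
    rintro x ⟨p, hp, hpx⟩ r hr
    exact ⟨p, hp, fun e => le_trans (hpx e) (le_add_of_nonneg_right (hr e))⟩
  have hDnn : ∀ x ∈ dominant P, ∀ e, 0 ≤ x e := by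
    rintro x ⟨p, hp, hpx⟩ e
    exact le_trans (hPnn hp e) (hpx e)
  have hPconv : Convex ℝ P := hP ▸ convex_convexHull ℝ _
  have hDconv : Convex ℝ (dominant P) := by
    rintro x ⟨px, hpx, hpxx⟩ y ⟨py, hpy, hpyy⟩ a b ha hb hab
    refine ⟨a • px + b • py, hPconv hpx hpy ha hb hab, fun e => ?_⟩
    simp only [Pi.add_apply, Pi.smul_apply, smul_eq_mul]
    exact add_le_add (mul_le_mul_of_nonneg_left (hpxx e) ha)
      (mul_le_mul_of_nonneg_left (hpyy e) hb)
  set G : Finset (E → ℝ) :=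
    (Vs.image (fun p => p - x0)) ∪ (Finset.univ.image (fun e => Pi.single e (1:ℝ))) with hG
  have hsingle_sum : ∀ (h' : E → ℝ) (e : E),
      ∑ e', h' e' * (Pi.single e (1:ℝ) : E → ℝ) e' = h' e := by
    intro h' e
    rw [Finset.sum_eq_single e]
    · simp
    · intro e' _ hne
      simp [Pi.single_apply, hne]
    · intro he; exact absurd (Finset.mem_univ e) he
  have key : ∀ e0 : E, ∃ h : E → ℝ, (∀ e, h e ≤ 0) ∧
      (∀ p ∈ Vs, ∑ e, h e * p e ≤ ∑ e, h e * x0 e) ∧ h e0 < 0 := by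
    intro e0
    by_cases hbc : (-Pi.single e0 (1:ℝ) : E → ℝ) ∈ Stmt9Aux.coneOf G
    · exfalso
      obtain ⟨lam, hnn, hsum⟩ := hbc
      set F : Finset (E → ℝ) := Vs.image (fun p => p - x0) with hF
      have hFG : F ⊆ G := Finset.subset_union_left
      set s1 : ℝ := ∑ g ∈ F, lam g with hs1
      have hs1nn : 0 ≤ s1 := Finset.sum_nonneg fun g hg => hnn g (hFG hg)
      set T : ℝ := s1 + 1 with hT
      have hTpos : 0 < T := by linarith
      have hyD : x0 + ∑ g ∈ F, (lam g / T) • g ∈ dominant P := by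
        rcases eq_or_lt_of_le hs1nn with hz | hs1pos
        · have hzero : ∀ g ∈ F, lam g = 0 := by
            intro g hg
            exact (Finset.sum_eq_zero_iff_of_nonneg
              (fun g hg => hnn g (hFG hg))).mp hz.symm g hg
          have : ∑ g ∈ F, (lam g / T) • g = 0 :=
            Finset.sum_eq_zero fun g hg => by rw [hzero g hg]; simp
          rw [this, add_zero]; exact hx0D
        · set q : E → ℝ := ∑ g ∈ F, (lam g / s1) • (x0 + g) with hq
          have hqD : q ∈ dominant P := by
            apply hDconv.sum_mem (fun g hg => div_nonneg (hnn g (hFG hg)) hs1nn)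
            · rw [← Finset.sum_div, ← hs1]
              exact div_self (ne_of_gt hs1pos)
            · intro g hg
              obtain ⟨p, hp, rfl⟩ := Finset.mem_image.mp hg
              rw [add_sub_cancel]
              exact hVsD p hp
          have hcomb : x0 + ∑ g ∈ F, (lam g / T) • g
              = (1 - s1/T) • x0 + (s1/T) • q := by
            rw [hq, Finset.smul_sum]
            have h1 : ∀ g ∈ F, (s1/T) • ((lam g / s1) • (x0 + g))
                = (lam g / T) • x0 + (lam g / T) • g := by
              intro g _
              rw [smul_smul, show s1/T * (lam g / s1) = lam g / T by
                field_simp, smul_add]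
            rw [Finset.sum_congr rfl h1, Finset.sum_add_distrib, ← Finset.sum_smul]
            rw [show ∑ g ∈ F, lam g / T = s1 / T from (Finset.sum_div F lam T).symm]
            module
          rw [hcomb]
          have h01 : 0 ≤ s1 / T := by positivity
          have h02 : s1 / T ≤ 1 := by
            rw [div_le_one hTpos]; linarith
          exact hDconv hx0D hqD (by linarith) h01 (by ring)
      have hrnn : ∀ e, 0 ≤ (∑ g ∈ G \ F, (lam g / T) • g) e := by
        intro e
        rw [Finset.sum_apply]
        apply Finset.sum_nonneg
        intro g hg
        have hgG : g ∈ G := (Finset.mem_sdiff.mp hg).1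
        have hgnF : g ∉ F := (Finset.mem_sdiff.mp hg).2
        have hg2 : g ∈ Finset.univ.image (fun e => Pi.single e (1:ℝ)) := by
          rcases Finset.mem_union.mp hgG with h1 | h2
          · exact absurd h1 hgnF
          · exact h2
        obtain ⟨e', _, rfl⟩ := Finset.mem_image.mp hg2
        have hge : (0:ℝ) ≤ (Pi.single e' (1:ℝ) : E → ℝ) e := by
          by_cases h : e = e' <;> simp [Pi.single_apply, h]
        simp only [Pi.smul_apply, smul_eq_mul]
        exact mul_nonneg (div_nonneg (hnn _ hgG) hTpos.le) hge
      have hsplit : (1/T) • (-Pi.single e0 (1:ℝ) : E → ℝ)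
          = ∑ g ∈ F, (lam g / T) • g + ∑ g ∈ G \ F, (lam g / T) • g := by
        rw [hsum, Finset.smul_sum]
        have h1 : ∀ g ∈ G, (1/T) • (lam g • g) = (lam g / T) • g := by
          intro g _
          rw [smul_smul]; congr 1; ring
        rw [Finset.sum_congr rfl h1,
          ← Finset.sum_inter_add_sum_sdiff G F (fun g => (lam g / T) • g),
          Finset.inter_eq_right.mpr hFG]
      have hA : x0 + (1/T) • (-Pi.single e0 (1:ℝ) : E → ℝ) ∈ dominant P := by
        rw [hsplit, ← add_assoc]
        exact hDup _ hyD _ hrnn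
      set τ : ℝ := max (u e0) (v e0) - x0 e0 + 1 with hτ
      have hx0e : x0 e0 = (u e0 + v e0)/2 := by
        rw [hx0]; simp only [Pi.smul_apply, Pi.add_apply, smul_eq_mul]; ring
      have hx0max : x0 e0 ≤ max (u e0) (v e0) := by
        have h1 := le_max_left (u e0) (v e0)
        have h2 := le_max_right (u e0) (v e0)
        rw [hx0e]; linarith
      have hτpos : 0 < τ := by rw [hτ]; linarith
      have hBD : x0 + τ • (Pi.single e0 (1:ℝ) : E → ℝ) ∈ dominant P := by
        apply hDup _ hx0D
        intro e
        have hge : (0:ℝ) ≤ (Pi.single e0 (1:ℝ) : E → ℝ) e := by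
          by_cases h : e = e0 <;> simp [Pi.single_apply, h]
        simp only [Pi.smul_apply, smul_eq_mul]
        exact mul_nonneg hτpos.le hge
      have htpos : 0 < 1/T := by positivity
      have hsumpos : 0 < 1/T + τ := by linarith
      have hopen : x0 ∈ openSegment ℝ (x0 + (1/T) • (-Pi.single e0 (1:ℝ) : E → ℝ))
          (x0 + τ • (Pi.single e0 (1:ℝ) : E → ℝ)) := by
        refine ⟨τ/(1/T + τ), (1/T)/(1/T + τ), by positivity, by positivity, ?_, ?_⟩
        · field_simp; ring
        · match_scalars
          · field_simp; ring
          · field_simp; ring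
      have hBseg := hedge.2.right_mem_of_mem_openSegment hA hBD hx0seg hopen
      obtain ⟨a, b, ha, hb, hab, hUV⟩ := hBseg
      have h1 : a * u e0 + b * v e0 = x0 e0 + τ := by
        have := congrFun hUV e0
        simpa [Pi.single_eq_same] using this
      have hmax : a * u e0 + b * v e0 ≤ max (u e0) (v e0) := by
        have hu := le_max_left (u e0) (v e0)
        have hv := le_max_right (u e0) (v e0)
        calc a * u e0 + b * v e0
            ≤ a * (u e0 ⊔ v e0) + b * (u e0 ⊔ v e0) :=
              add_le_add (mul_le_mul_of_nonneg_left hu ha)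
                (mul_le_mul_of_nonneg_left hv hb)
          _ = u e0 ⊔ v e0 := by rw [← add_mul, hab, one_mul]
      rw [hτ] at h1
      linarith
    · obtain ⟨h, hG0, hpos⟩ := Stmt9Aux.exists_separating G _ hbc
      refine ⟨h, ?_, ?_, ?_⟩
      · intro e
        have hmem : (Pi.single e (1:ℝ) : E → ℝ) ∈ G :=
          Finset.mem_union_right _ (Finset.mem_image_of_mem _ (Finset.mem_univ e))
        have := hG0 _ hmem
        rwa [hsingle_sum h e] at this
      · intro p hp
        have hmem : p - x0 ∈ G :=
          Finset.mem_union_left _ (Finset.mem_image_of_mem _ hp)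
        have h2 := hG0 _ hmem
        have h3 : ∑ e, h e * (p - x0) e = ∑ e, h e * p e - ∑ e, h e * x0 e := by
          rw [← Finset.sum_sub_distrib]
          exact Finset.sum_congr rfl fun e _ => by
            simp [Pi.sub_apply, mul_sub]
        rw [h3] at h2
        linarith
      · have h4 : ∑ e, h e * (-Pi.single e0 (1:ℝ) : E → ℝ) e = -h e0 := by
          have : ∀ e, h e * (-Pi.single e0 (1:ℝ) : E → ℝ) e
              = -(h e * (Pi.single e0 (1:ℝ) : E → ℝ) e) := by
            intro e; simp
          rw [Finset.sum_congr rfl fun e _ => this e, Finset.sum_neg_distrib,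
            hsingle_sum h e0]
        rw [h4] at hpos
        linarith
  choose hh hh1 hh2 hh3 using key
  set H : E → ℝ := fun e => ∑ e0, hh e0 e with hHdef
  have hHneg : ∀ e, H e < 0 := by
    intro e
    have h1 : ∑ e0 : E, hh e0 e < ∑ e0 : E, (0:ℝ) :=
      Finset.sum_lt_sum (fun i _ => hh1 i e) ⟨e, Finset.mem_univ e, hh3 e⟩
    simpa using h1
  have hswap : ∀ z : E → ℝ, ∑ e, H e * z e = ∑ e0, ∑ e, hh e0 e * z e := by
    intro z
    calc ∑ e, H e * z e = ∑ e, ∑ e0, hh e0 e * z e :=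
          Finset.sum_congr rfl fun e _ => by simp only [hHdef]; exact Finset.sum_mul ..
      _ = ∑ e0, ∑ e, hh e0 e * z e := Finset.sum_comm
  have hHVs : ∀ p ∈ Vs, ∑ e, H e * p e ≤ ∑ e, H e * x0 e := by
    intro p hp
    rw [hswap p, hswap x0]
    exact Finset.sum_le_sum fun e0 _ => hh2 e0 p hp
  have hHP : ∀ q ∈ P, ∑ e, H e * q e ≤ ∑ e, H e * x0 e := by
    intro q hq
    rw [hP] at hq
    have hlin : IsLinearMap ℝ (fun z : E → ℝ => ∑ e, H e * z e) := by
      constructor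
      · intro z1 z2
        rw [← Finset.sum_add_distrib]
        exact Finset.sum_congr rfl fun e _ => by simp [mul_add]
      · intro c z1
        simp only [Pi.smul_apply, smul_eq_mul]
        rw [Finset.mul_sum]
        exact Finset.sum_congr rfl fun e _ => by ring
    exact convexHull_min (fun p hp => hHVs p hp)
      (convex_halfSpace_le hlin (∑ e, H e * x0 e)) hq
  have hHD : ∀ y ∈ dominant P, ∑ e, H e * y e ≤ ∑ e, H e * x0 e := by
    rintro y ⟨p, hp, hpy⟩
    have h1 : ∑ e, H e * y e ≤ ∑ e, H e * p e :=
      Finset.sum_le_sum fun e _ =>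
        mul_le_mul_of_nonpos_left (hpy e) (le_of_lt (hHneg e))
    exact h1.trans (hHP p hp)
  have hx0nn : ∀ e, 0 ≤ x0 e := hDnn x0 hx0D
  set Γ : Finset ℝ :=
    insert 1 (Finset.univ.image (fun e => -H e / (2 * (x0 e + 1)))) with hΓ
  have hΓne : Γ.Nonempty := Finset.insert_nonempty _ _
  set γ : ℝ := Γ.min' hΓne with hγ
  have hγpos : 0 < γ := by
    have hmem := Finset.min'_mem Γ hΓne
    rw [← hγ] at hmem
    rw [hΓ] at hmem
    rcases Finset.mem_insert.mp hmem with h1 | h2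
    · rw [h1]; norm_num
    · obtain ⟨e, _, he⟩ := Finset.mem_image.mp h2
      rw [← he]
      have h1 := hHneg e
      have h2 := hx0nn e
      apply div_pos (by linarith) (by linarith)
  have hγle : ∀ e, 2 * γ * x0 e < -H e := by
    intro e
    have hmem : -H e / (2 * (x0 e + 1)) ∈ Γ := by
      rw [hΓ]
      exact Finset.mem_insert_of_mem (Finset.mem_image_of_mem _ (Finset.mem_univ e))
    have hle : γ ≤ -H e / (2 * (x0 e + 1)) := Finset.min'_le Γ _ hmem
    have h1 : (0:ℝ) < x0 e + 1 := by linarith [hx0nn e]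
    have h2 : (0:ℝ) < -H e := by linarith [hHneg e]
    rw [le_div_iff₀ (by linarith)] at hle
    nlinarith [hx0nn e]
  have hcost : ∀ e, ∀ t : ℝ, 0 ≤ t → 0 < -H e + 2 * γ * (t - x0 e) := by
    intro e t ht
    nlinarith [hγle e, mul_nonneg hγpos.le ht]
  have hint : ∀ (A B a : ℝ), (∫ s in (0:ℝ)..a, (A + B * s)) = A * a + B * a^2 / 2 := by
    intro A B a
    rw [intervalIntegral.integral_add intervalIntegrable_const
      (Continuous.intervalIntegrable (u := fun s => B * s) (continuous_const.mul continuous_id') _ _),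
      intervalIntegral.integral_const, intervalIntegral.integral_const_mul, integral_id]
    simp [smul_eq_mul]
    ring
  have hbeck : ∀ z : E → ℝ, beckmann (fun e t => -H e + 2 * γ * (t - x0 e)) z
      = ∑ e, ((-H e - 2*γ*x0 e) * z e + γ * (z e)^2) := by
    intro z
    rw [beckmann]
    apply Finset.sum_congr rfl
    intro e _
    have hf : (fun t => -H e + 2 * γ * (t - x0 e))
        = fun t => (-H e - 2*γ*x0 e) + (2*γ) * t := by
      funext t; ring
    rw [hf, hint]
    ring
  refine ⟨H, γ, hHneg, hγpos, hcost, hx0D, ?_⟩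
  intro y hyD' hyne
  rw [hbeck, hbeck]
  have hdiff : ∑ e, ((-H e - 2*γ*x0 e) * y e + γ * (y e)^2)
      - ∑ e, ((-H e - 2*γ*x0 e) * x0 e + γ * (x0 e)^2)
      = (∑ e, H e * x0 e - ∑ e, H e * y e) + γ * ∑ e, (y e - x0 e)^2 := by
    rw [← Finset.sum_sub_distrib,
      show (∑ e, H e * x0 e - ∑ e, H e * y e) = ∑ e, (H e * x0 e - H e * y e)
        from (Finset.sum_sub_distrib _ _).symm,
      Finset.mul_sum, ← Finset.sum_add_distrib]
    exact Finset.sum_congr rfl fun e _ => by ring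
  have hsq : 0 < ∑ e, (y e - x0 e)^2 := by
    obtain ⟨e1, hne1⟩ := Function.ne_iff.mp hyne
    have hne2 : y e1 - x0 e1 ≠ 0 := sub_ne_zero.mpr hne1
    have hposterm : 0 < (y e1 - x0 e1)^2 := by positivity
    exact lt_of_lt_of_le hposterm
      (Finset.single_le_sum (f := fun e => (y e - x0 e)^2)
        (fun e _ => sq_nonneg _) (Finset.mem_univ e1))
  have hlin := hHD y hyD'
  nlinarith [mul_pos hγpos hsq]
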